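/- γ_gr(G;C) ≤ n − δ(G;C) + 1, where n = |V| and δ(G;C) := min_{v∈V} |N⟨v⟩|. -/

import Mathlib

namespace LegalSeq

variable {V : Type*}

/-- The generalized neighborhood `N⟨v⟩`: the closed neighborhood of `v` if `v ∈ C`,
the open neighborhood otherwise. -/
noncomputable def gN [Fintype V] (G : SimpleGraph V) (C : Set V) (v : V) : Finset V := by
  classical
  exact (Set.toFinite (if v ∈ C then insert v (G.neighborSet v) else G.neighborSet v)).toFinset

/-- Union of the generalized neighborhoods of the vertices of a list. -/
noncomputable def nUnion [Fintype V] (G : SimpleGraph V) (C : Set V) (l : List V) : Finset V := by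
  classical
  exact l.toFinset.biUnion (gN G C)

/-- A list of pairwise distinct vertices is a legal sequence if every vertex of the sequence,
except possibly the first one, has a generalized neighbor that is not in the generalized
neighborhood of any preceding vertex. -/
def IsLegal [Fintype V] (G : SimpleGraph V) (C : Set V) (l : List V) : Prop :=
  l.Nodup ∧ ∀ (i : ℕ) (h : i < l.length), 0 < i →
    ¬ (gN G C (l.get ⟨i, h⟩) ⊆ nUnion G C (l.take i))

/-- A sequence is dominating if the generalized neighborhoods of its members cover all vertices. -/
def IsDom [Fintype V] (G : SimpleGraph V) (C : Set V) (l : List V) : Prop :=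
  nUnion G C l = Finset.univ

/-- The Grundy domination number of the instance `(G; C)`: the maximum length of a sequence
that is both legal and dominating. -/
noncomputable def grundy [Fintype V] (G : SimpleGraph V) (C : Set V) : ℕ :=
  sSup {k : ℕ | ∃ l : List V, IsLegal G C l ∧ IsDom G C l ∧ l.length = k}

/-- `δ(G;C)`, the minimum cardinality of a generalized neighborhood. -/
noncomputable def gdelta [Fintype V] (G : SimpleGraph V) (C : Set V) : ℕ :=
  sInf (Set.range fun v : V => (gN G C v).card)

lemma nUnion_append [Fintype V] [DecidableEq V] (G : SimpleGraph V) (C : Set V) (a b : List V) :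
    nUnion G C (a ++ b) = nUnion G C a ∪ nUnion G C b := by
  classical
  ext x
  simp only [nUnion, Finset.mem_biUnion, List.mem_toFinset, List.mem_append, Finset.mem_union]
  constructor
  · rintro ⟨v, hv | hv, hx⟩
    · exact Or.inl ⟨v, hv, hx⟩
    · exact Or.inr ⟨v, hv, hx⟩
  · rintro (⟨v, hv, hx⟩ | ⟨v, hv, hx⟩)
    · exact ⟨v, Or.inl hv, hx⟩
    · exact ⟨v, Or.inr hv, hx⟩

lemma nUnion_take_succ [Fintype V] [DecidableEq V] (G : SimpleGraph V) (C : Set V) (l : List V)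
    (i : ℕ) (h : i < l.length) :
    nUnion G C (l.take (i + 1)) = nUnion G C (l.take i) ∪ gN G C (l.get ⟨i, h⟩) := by
  classical
  rw [← List.take_concat_get h, List.concat_eq_append, nUnion_append]
  congr 1
  simp [nUnion]

lemma legal_card [Fintype V] (G : SimpleGraph V) (C : Set V) (l : List V)
    (hl : IsLegal G C l) :
    ∀ i, 0 < i → i ≤ l.length → gdelta G C + (i - 1) ≤ (nUnion G C (l.take i)).card := by
  classical
  intro i
  induction i with
  | zero => intro h; omega
  | succ i ih =>
    intro _ h
    have hlt : i < l.length := h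
    have hdelta : gdelta G C ≤ (gN G C (l.get ⟨i, hlt⟩)).card :=
      Nat.sInf_le (Set.mem_range_self _)
    rcases Nat.eq_zero_or_pos i with h0 | hi
    · subst h0
      rw [nUnion_take_succ G C l 0 hlt]
      have hsub : gN G C (l.get ⟨0, hlt⟩) ⊆ nUnion G C (l.take 0) ∪ gN G C (l.get ⟨0, hlt⟩) :=
        Finset.subset_union_right
      have := Finset.card_le_card hsub
      omega
    · have step := hl.2 i hlt hi
      have hsub : nUnion G C (l.take i) ⊂ nUnion G C (l.take (i + 1)) := by
        rw [nUnion_take_succ G C l i hlt]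
        refine Finset.ssubset_iff_of_subset Finset.subset_union_left |>.mpr ?_
        obtain ⟨x, hx, hxn⟩ := Finset.not_subset.mp step
        exact ⟨x, Finset.mem_union_right _ hx, hxn⟩
      have hcard := Finset.card_lt_card hsub
      have := ih hi (le_of_lt hlt)
      omega

/-- `γ_gr(G;C) ≤ n − δ(G;C) + 1`. -/
theorem grundy_le [Fintype V] [Nonempty V] (G : SimpleGraph V) (C : Set V)
    (hiso : ∀ w : V, w ∉ C → ∃ z, G.Adj w z) :
    grundy G C ≤ Fintype.card V - gdelta G C + 1 := by
  classical
  apply csSup_le'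
  rintro k ⟨l, hleg, hdom, rfl⟩
  rcases Nat.eq_zero_or_pos l.length with h0 | hpos
  · omega
  · have key := legal_card G C l hleg l.length hpos le_rfl
    rw [List.take_length] at key
    have hcard : (nUnion G C l).card ≤ Fintype.card V := Finset.card_le_univ _
    omega

end LegalSeq
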